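/- The function R(a,b,P), defined on the set S_d = {(a,b,P) : a ≤ b, deg P = d, P'(x)P'(y) ≥ 0 for all x,y ∈ [a,b]} as the point of [a,b] where |P| attains its minimum (given by the explicit case formula), is continuous on S_d, where monic degree-d polynomials are identified with ℝ^d via their coefficients. -/

import Mathlib

open Polynomial Set

noncomputable def monicPoly (d : ℕ) (c : Fin d → ℝ) : Polynomial ℝ :=
  X ^ d + ∑ i : Fin d, C (c i) * X ^ (i : ℕ)

open Filter

noncomputable def Qfun (d : ℕ) (p : ℝ × ℝ × (Fin d → ℝ)) (x : ℝ) : ℝ :=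
  ((monicPoly d p.2.2).eval p.2.1 - (monicPoly d p.2.2).eval p.1) *
    (monicPoly d p.2.2).eval x

lemma eval_monicPoly (d : ℕ) (c : Fin d → ℝ) (y : ℝ) :
    (monicPoly d c).eval y = y ^ d + ∑ i : Fin d, c i * y ^ (i : ℕ) := by
  simp [monicPoly, eval_finset_sum]

lemma coeff_monicPoly_self (d : ℕ) (c : Fin d → ℝ) :
    (monicPoly d c).coeff d = 1 := by
  rw [monicPoly, coeff_add, coeff_X_pow, if_pos rfl, finset_sum_coeff]
  rw [Finset.sum_eq_zero, add_zero]
  intro i _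
  rw [coeff_C_mul, coeff_X_pow, if_neg (by exact_mod_cast (Nat.ne_of_lt i.isLt).symm), mul_zero]

lemma continuous_eval_monic (d : ℕ) :
    Continuous (fun q : ℝ × (Fin d → ℝ) => (monicPoly d q.2).eval q.1) := by
  simp only [eval_monicPoly]
  exact (continuous_fst.pow d).add <| continuous_finset_sum _ fun i _ =>
    ((continuous_apply (A := fun _ : Fin d => ℝ) i).comp continuous_snd).mul
      (continuous_fst.pow i)

lemma monic_mono_or_anti (d : ℕ) (a b : ℝ) (c : Fin d → ℝ)
    (h : ∀ x ∈ Icc a b, ∀ y ∈ Icc a b,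
      0 ≤ (monicPoly d c).derivative.eval x * (monicPoly d c).derivative.eval y) :
    MonotoneOn (fun x => (monicPoly d c).eval x) (Icc a b) ∨
      AntitoneOn (fun x => (monicPoly d c).eval x) (Icc a b) := by
  by_cases hpos : ∀ x ∈ Icc a b, 0 ≤ (monicPoly d c).derivative.eval x
  · left
    apply monotoneOn_of_deriv_nonneg (convex_Icc a b)
      (monicPoly d c).continuous.continuousOn
      (fun x _ => ((monicPoly d c).differentiable x).differentiableWithinAt)
    intro x hx
    rw [Polynomial.deriv]
    exact hpos x (interior_subset hx)
  · right
    push_neg at hpos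
    obtain ⟨x₀, hx₀, hneg⟩ := hpos
    apply antitoneOn_of_deriv_nonpos (convex_Icc a b)
      (monicPoly d c).continuous.continuousOn
      (fun x _ => ((monicPoly d c).differentiable x).differentiableWithinAt)
    intro x hx
    rw [Polynomial.deriv]
    nlinarith [h x₀ hx₀ x (interior_subset hx)]

lemma monic_no_repeat (d : ℕ) (hd : d ≠ 0) (a b : ℝ) (c : Fin d → ℝ)
    (hm : MonotoneOn (fun x => (monicPoly d c).eval x) (Icc a b) ∨
      AntitoneOn (fun x => (monicPoly d c).eval x) (Icc a b))
    {x y : ℝ} (hx : x ∈ Icc a b) (hy : y ∈ Icc a b) (hxy : x < y)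
    (he : (monicPoly d c).eval x = (monicPoly d c).eval y) : False := by
  have hz : ∀ z ∈ Icc x y, (monicPoly d c).eval z = (monicPoly d c).eval x := by
    intro z hzm
    have hzI : z ∈ Icc a b := ⟨hx.1.trans hzm.1, hzm.2.trans hy.2⟩
    rcases hm with hm | hm
    · have h1 := hm hx hzI hzm.1
      have h2 := hm hzI hy hzm.2
      simp only at h1 h2
      linarith
    · have h1 := hm hx hzI hzm.1
      have h2 := hm hzI hy hzm.2
      simp only at h1 h2
      linarith
  have hzero : monicPoly d c - C ((monicPoly d c).eval x) = 0 := by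
    apply eq_zero_of_infinite_isRoot
    refine (Set.Icc_infinite hxy).mono ?_
    intro z hzm
    simp [IsRoot, hz z hzm]
  have hc := congrArg (fun q : Polynomial ℝ => q.coeff d) hzero
  simp [coeff_sub, coeff_monicPoly_self, coeff_C, hd] at hc

/-- any function `f` satisfying the case formula defining
`R(a,b,P)` on the set `S_d` of triples `(a,b,P)` with `a ≤ b` and `P` (monic of
degree `d`, identified with its coefficient vector in `ℝ^d`) weakly monotone on
`[a,b]`, is continuous on `S_d`. -/
theorem R_continuousOn
    (d : ℕ) (f : ℝ × ℝ × (Fin d → ℝ) → ℝ)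
    (S : Set (ℝ × ℝ × (Fin d → ℝ)))
    (hS : S = {p | p.1 ≤ p.2.1 ∧
      ∀ x ∈ Set.Icc p.1 p.2.1, ∀ y ∈ Set.Icc p.1 p.2.1,
        0 ≤ (monicPoly d p.2.2).derivative.eval x *
            (monicPoly d p.2.2).derivative.eval y})
    (hf : ∀ p ∈ S,
      (p.1 = p.2.1 ∧ f p = p.1) ∨
      (p.1 < p.2.1 ∧
        0 ≤ ((monicPoly d p.2.2).eval p.2.1 - (monicPoly d p.2.2).eval p.1) *
            (monicPoly d p.2.2).eval p.1 ∧ f p = p.1) ∨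
      (p.1 < p.2.1 ∧
        ¬ 0 ≤ ((monicPoly d p.2.2).eval p.2.1 - (monicPoly d p.2.2).eval p.1) *
            (monicPoly d p.2.2).eval p.1 ∧
        ((monicPoly d p.2.2).eval p.2.1 - (monicPoly d p.2.2).eval p.1) *
            (monicPoly d p.2.2).eval p.2.1 ≤ 0 ∧ f p = p.2.1) ∨
      (p.1 < p.2.1 ∧
        ¬ 0 ≤ ((monicPoly d p.2.2).eval p.2.1 - (monicPoly d p.2.2).eval p.1) *
            (monicPoly d p.2.2).eval p.1 ∧
        ¬ ((monicPoly d p.2.2).eval p.2.1 - (monicPoly d p.2.2).eval p.1) *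
            (monicPoly d p.2.2).eval p.2.1 ≤ 0 ∧
        f p ∈ Set.Ioo p.1 p.2.1 ∧ (monicPoly d p.2.2).eval (f p) = 0)) :
    ContinuousOn f S := by
  have hmem : ∀ p ∈ S, p.1 ≤ p.2.1 ∧
      ∀ x ∈ Icc p.1 p.2.1, ∀ y ∈ Icc p.1 p.2.1,
        0 ≤ (monicPoly d p.2.2).derivative.eval x *
            (monicPoly d p.2.2).derivative.eval y := by
    intro p hp; rw [hS] at hp; exact hp
  rcases eq_or_ne d 0 with hd0 | hd0
  · -- d = 0 : the polynomial is 1, f = fst on S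
    have hfp : ∀ p ∈ S, f p = p.1 := by
      intro p hp
      have hΔ : (monicPoly d p.2.2).eval p.2.1 - (monicPoly d p.2.2).eval p.1 = 0 := by
        subst hd0; simp [eval_monicPoly]
      rcases hf p hp with ⟨_, h⟩ | ⟨_, _, h⟩ | ⟨_, h2, _⟩ | ⟨_, h2, _⟩
      · exact h
      · exact h
      · exact absurd (by rw [hΔ, zero_mul]) h2
      · exact absurd (by rw [hΔ, zero_mul]) h2
    exact ContinuousOn.congr continuous_fst.continuousOn hfp
  · -- d ≠ 0
    have bound : ∀ p ∈ S, p.1 ≤ f p ∧ f p ≤ p.2.1 := by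
      intro p hp
      rcases hf p hp with ⟨he, h⟩ | ⟨hlt, _, h⟩ | ⟨hlt, _, _, h⟩ | ⟨hlt, _, _, h, _⟩
      · exact ⟨h.ge, h.le.trans he.le⟩
      · exact ⟨h.ge, h.le.trans hlt.le⟩
      · exact ⟨hlt.le.trans h.ge, h.le⟩
      · exact ⟨h.1.le, h.2.le⟩
    have key : ∀ p ∈ S, p.1 < p.2.1 →
        (p.1 ≤ f p ∧ f p ≤ p.2.1) ∧
        (∀ x ∈ Icc p.1 p.2.1, x < f p → Qfun d p x < 0) ∧
        (∀ x ∈ Icc p.1 p.2.1, f p < x → 0 < Qfun d p x) ∧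
        (f p < p.2.1 → 0 ≤ Qfun d p (f p)) ∧
        (p.1 < f p → Qfun d p (f p) ≤ 0) := by
      intro p hp hab
      obtain ⟨-, hder⟩ := hmem p hp
      have hm := monic_mono_or_anti d p.1 p.2.1 p.2.2 hder
      have haI : p.1 ∈ Icc p.1 p.2.1 := ⟨le_refl _, hab.le⟩
      have hbI : p.2.1 ∈ Icc p.1 p.2.1 := ⟨hab.le, le_refl _⟩
      have hnr : ∀ x ∈ Icc p.1 p.2.1, ∀ y ∈ Icc p.1 p.2.1, x < y →
          (monicPoly d p.2.2).eval x = (monicPoly d p.2.2).eval y → False :=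
        fun x hx y hy hxy he => monic_no_repeat d hd0 _ _ _ hm hx hy hxy he
      have hΔ : (monicPoly d p.2.2).eval p.2.1 - (monicPoly d p.2.2).eval p.1 ≠ 0 := by
        intro h
        exact hnr _ haI _ hbI hab (sub_eq_zero.mp h).symm
      have hQm : MonotoneOn (Qfun d p) (Icc p.1 p.2.1) := by
        intro x hx y hy hxy
        rcases hm with hm | hm
        · have hΔ0 : (monicPoly d p.2.2).eval p.1 ≤ (monicPoly d p.2.2).eval p.2.1 :=
            hm haI hbI hab.le
          have h1 := hm hx hy hxy
          simp only at h1 hΔ0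
          simp only [Qfun]
          nlinarith
        · have hΔ0 : (monicPoly d p.2.2).eval p.2.1 ≤ (monicPoly d p.2.2).eval p.1 :=
            hm haI hbI hab.le
          have h1 := hm hx hy hxy
          simp only at h1 hΔ0
          simp only [Qfun]
          nlinarith
      have hQ0 : ∀ x, Qfun d p x = 0 → (monicPoly d p.2.2).eval x = 0 := by
        intro x h
        simp only [Qfun] at h
        rcases mul_eq_zero.mp h with h | h
        · exact absurd h hΔ
        · exact h
      rcases hf p hp with ⟨he, -⟩ | ⟨-, h2, hfa⟩ | ⟨-, h2, h3, hfb⟩ | ⟨-, h2, h3, hio, hroot⟩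
      · exact absurd he hab.ne
      · -- f p = p.1
        have hQa : 0 ≤ Qfun d p p.1 := by simp only [Qfun]; exact h2
        refine ⟨⟨hfa.ge, hfa.le.trans hab.le⟩, ?_, ?_, fun _ => by rw [hfa]; exact hQa, ?_⟩
        · intro x hx hxf
          rw [hfa] at hxf
          exact absurd hxf (not_lt.mpr hx.1)
        · intro x hx hfx
          rw [hfa] at hfx
          have h1 : Qfun d p p.1 ≤ Qfun d p x := hQm haI hx hfx.le
          rcases (hQa.trans h1).lt_or_eq with h | h
          · exact h
          · exfalso
            have hQa0 : Qfun d p p.1 = 0 := by linarith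
            exact hnr p.1 haI x hx hfx ((hQ0 _ hQa0).trans (hQ0 x h.symm).symm)
        · intro h
          rw [hfa] at h
          exact absurd h (lt_irrefl _)
      · -- f p = p.2.1
        have hQa : Qfun d p p.1 < 0 := by simp only [Qfun]; exact not_le.mp h2
        have hQb : Qfun d p p.2.1 ≤ 0 := by simp only [Qfun]; exact h3
        refine ⟨⟨hab.le.trans hfb.ge, hfb.le⟩, ?_, ?_, ?_, fun _ => by rw [hfb]; exact hQb⟩
        · intro x hx hxf
          rw [hfb] at hxf
          have h1 : Qfun d p x ≤ Qfun d p p.2.1 := hQm hx hbI hx.2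
          rcases (h1.trans hQb).lt_or_eq with h | h
          · exact h
          · exfalso
            have hQb0 : Qfun d p p.2.1 = 0 := by linarith
            exact hnr x hx p.2.1 hbI hxf ((hQ0 x h).trans (hQ0 _ hQb0).symm)
        · intro x hx hfx
          rw [hfb] at hfx
          exact absurd hfx (not_lt.mpr hx.2)
        · intro h
          rw [hfb] at h
          exact absurd h (lt_irrefl _)
      · -- root case
        have hQa : Qfun d p p.1 < 0 := by simp only [Qfun]; exact not_le.mp h2
        have hQb : 0 < Qfun d p p.2.1 := by simp only [Qfun]; exact not_le.mp h3
        have hfI : f p ∈ Icc p.1 p.2.1 := ⟨hio.1.le, hio.2.le⟩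
        have hQf : Qfun d p (f p) = 0 := by simp only [Qfun, hroot, mul_zero]
        refine ⟨⟨hfI.1, hfI.2⟩, ?_, ?_, fun _ => hQf.ge, fun _ => hQf.le⟩
        · intro x hx hxf
          have h1 : Qfun d p x ≤ Qfun d p (f p) := hQm hx hfI hxf.le
          rcases (h1.trans_eq hQf).lt_or_eq with h | h
          · exact h
          · exact absurd ((hQ0 x h).trans hroot.symm) fun he => hnr x hx (f p) hfI hxf he
        · intro x hx hfx
          have h1 : Qfun d p (f p) ≤ Qfun d p x := hQm hfI hx hfx.le
          have h2' : 0 ≤ Qfun d p x := by rw [← hQf]; exact h1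
          rcases h2'.lt_or_eq with h | h
          · exact h
          · exact absurd (hroot.trans (hQ0 x h.symm).symm) fun he => hnr (f p) hfI x hx hfx he
    intro p₀ hp₀
    have hQx : ∀ x : ℝ, Continuous fun p : ℝ × ℝ × (Fin d → ℝ) => Qfun d p x := by
      intro x
      have hE := continuous_eval_monic d
      simp only [Qfun]
      exact ((hE.comp (continuous_snd.fst.prodMk continuous_snd.snd)).sub
        (hE.comp (continuous_fst.prodMk continuous_snd.snd))).mul
        (hE.comp (continuous_const.prodMk continuous_snd.snd))
    rcases eq_or_lt_of_le (hmem p₀ hp₀).1 with heq | hab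
    · -- a₀ = b₀ : squeeze
      have h1 : Tendsto (fun p : ℝ × ℝ × (Fin d → ℝ) => p.1) (nhdsWithin p₀ S) (nhds p₀.1) :=
        (continuous_fst.tendsto p₀).mono_left nhdsWithin_le_nhds
      have h2 : Tendsto (fun p : ℝ × ℝ × (Fin d → ℝ) => p.2.1) (nhdsWithin p₀ S) (nhds p₀.1) := by
        rw [heq]
        exact (continuous_snd.fst.tendsto p₀).mono_left nhdsWithin_le_nhds
      have hf₀ : f p₀ = p₀.1 :=
        le_antisymm ((bound p₀ hp₀).2.trans heq.ge) (bound p₀ hp₀).1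
      have ht : Tendsto f (nhdsWithin p₀ S) (nhds p₀.1) :=
        tendsto_of_tendsto_of_tendsto_of_le_of_le' h1 h2
          (eventually_mem_nhdsWithin.mono fun p hp => (bound p hp).1)
          (eventually_mem_nhdsWithin.mono fun p hp => (bound p hp).2)
      rw [← hf₀] at ht
      exact ht
    · -- a₀ < b₀
      have K₀ := key p₀ hp₀ hab
      have e3 : ∀ᶠ p in nhdsWithin p₀ S, p.1 < p.2.1 := by
        have h : ∀ᶠ p in nhdsWithin p₀ S, 0 < p.2.1 - p.1 :=
          (((continuous_snd.fst.sub continuous_fst).tendsto p₀).mono_left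
            nhdsWithin_le_nhds).eventually (eventually_gt_nhds (sub_pos.2 hab))
        exact h.mono fun p hp => sub_pos.mp hp
      have : Tendsto f (nhdsWithin p₀ S) (nhds (f p₀)) := by
        refine tendsto_order.2 ⟨fun l hl => ?_, fun u hu => ?_⟩
        · rcases lt_or_ge l p₀.1 with hla | hla
          · have hev : ∀ᶠ p in nhdsWithin p₀ S, l < p.1 :=
              ((continuous_fst.tendsto p₀).mono_left nhdsWithin_le_nhds).eventually
                (eventually_gt_nhds hla)
            filter_upwards [hev, eventually_mem_nhdsWithin] with p h1 h2
            exact h1.trans_le (bound p h2).1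
          · have hlb : l < p₀.2.1 := hl.trans_le K₀.1.2
            have hQ₀ : Qfun d p₀ l < 0 := K₀.2.1 l ⟨hla, hlb.le⟩ hl
            have e1 : ∀ᶠ p in nhdsWithin p₀ S, Qfun d p l < 0 :=
              (((hQx l).tendsto p₀).mono_left nhdsWithin_le_nhds).eventually
                (eventually_lt_nhds hQ₀)
            have e2 : ∀ᶠ p in nhdsWithin p₀ S, l < p.2.1 :=
              ((continuous_snd.fst.tendsto p₀).mono_left nhdsWithin_le_nhds).eventually
                (eventually_gt_nhds hlb)
            filter_upwards [e1, e2, e3, eventually_mem_nhdsWithin] with p h1 h2 h3 hpS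
            obtain ⟨⟨hb1, hb2⟩, hII, hIII, hIV, hV⟩ := key p hpS h3
            by_contra hcon
            push_neg at hcon
            rcases hcon.lt_or_eq with h | h
            · exact absurd (hIII l ⟨hb1.trans h.le, h2.le⟩ h) (by linarith)
            · have h4 : f p < p.2.1 := by rw [h]; exact h2
              have h5 := hIV h4
              rw [h] at h5
              linarith
        · rcases lt_or_ge p₀.2.1 u with hub | hub
          · have hev : ∀ᶠ p in nhdsWithin p₀ S, p.2.1 < u :=
              ((continuous_snd.fst.tendsto p₀).mono_left nhdsWithin_le_nhds).eventually
                (eventually_lt_nhds hub)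
            filter_upwards [hev, eventually_mem_nhdsWithin] with p h1 h2
            exact ((bound p h2).2).trans_lt h1
          · have hua : p₀.1 < u := lt_of_le_of_lt K₀.1.1 hu
            have hQ₀ : 0 < Qfun d p₀ u := K₀.2.2.1 u ⟨hua.le, hub⟩ hu
            have e1 : ∀ᶠ p in nhdsWithin p₀ S, 0 < Qfun d p u :=
              (((hQx u).tendsto p₀).mono_left nhdsWithin_le_nhds).eventually
                (eventually_gt_nhds hQ₀)
            have e2 : ∀ᶠ p in nhdsWithin p₀ S, p.1 < u :=
              ((continuous_fst.tendsto p₀).mono_left nhdsWithin_le_nhds).eventually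
                (eventually_lt_nhds hua)
            filter_upwards [e1, e2, e3, eventually_mem_nhdsWithin] with p h1 h2 h3 hpS
            obtain ⟨⟨hb1, hb2⟩, hII, hIII, hIV, hV⟩ := key p hpS h3
            by_contra hcon
            push_neg at hcon
            rcases hcon.lt_or_eq with h | h
            · exact absurd (hII u ⟨h2.le, h.le.trans hb2⟩ h) (by linarith)
            · have h4 : p.1 < f p := by rw [← h]; exact h2
              have h5 := hV h4
              rw [← h] at h5
              linarith
      exact this
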